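/- Let n ≥ 1, d ≥ 2 be integers and p a prime with gcd(p,d) = 1. For every integer j with 0 ≤ j ≤ nd, the Frobenius numbers are nonnegative: h_{j,0} ≥ 0 and h_{j,1} ≥ 0. -/

import Mathlib

/-- The Hodge number `h_j` of the simplex `Simp(n,d)`. -/
noncomputable def hodge (n d : ℕ) (j : ℤ) : ℕ :=
  ((Fintype.piFinset fun _ : Fin n => Finset.Icc (1 : ℤ) ((d : ℤ) - 1)).filter
    fun u => ∑ i, u i = j).card

/-- The arithmetic Hodge sum `H_i := Σ_{j=0}^{⌊i/d⌋} h_{i−jd}`, with `H_i = 0` for `i < 0`. -/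
noncomputable def Hsum (n d : ℕ) (i : ℤ) : ℤ :=
  if i < 0 then 0
  else ∑ j ∈ Finset.range ((i / d).toNat + 1), (hodge n d (i - (j : ℤ) * d) : ℤ)

/- ### Auxiliary lemmas -/

lemma hodge_neg {n d : ℕ} {j : ℤ} (hj : j < 0) : hodge n d j = 0 := by
  unfold hodge
  rw [Finset.card_eq_zero, Finset.filter_eq_empty_iff]
  intro u hu
  rw [Fintype.mem_piFinset] at hu
  intro hsum
  have h0 : (0:ℤ) ≤ ∑ i, u i :=
    Finset.sum_nonneg fun i _ => le_trans one_pos.le (Finset.mem_Icc.mp (hu i)).1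
  omega

lemma Hsum_nonneg (n d : ℕ) (i : ℤ) : 0 ≤ Hsum n d i := by
  unfold Hsum
  split
  · exact le_refl 0
  · positivity

lemma Hsum_neg {n d : ℕ} {i : ℤ} (h : i < 0) : Hsum n d i = 0 := if_pos h

lemma Hsum_eq_sum {n d : ℕ} (hd : 0 < d) {i : ℤ} {K : ℕ} (hiK : i < (K:ℤ) * d) :
    Hsum n d i = ∑ k ∈ Finset.range K, (hodge n d (i - (k:ℤ) * d) : ℤ) := by
  have hd' : (0:ℤ) < d := by exact_mod_cast hd
  rcases lt_or_ge i 0 with hi | hi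
  · rw [Hsum_neg hi]
    symm
    apply Finset.sum_eq_zero
    intro k _
    have hk : (0:ℤ) ≤ (k:ℤ) * d := by positivity
    rw [hodge_neg (by omega)]
    norm_num
  · unfold Hsum
    rw [if_neg (not_lt.mpr hi)]
    apply Finset.sum_subset
    · apply Finset.range_subset_range.mpr
      have h1 : i / (d:ℤ) < (K:ℤ) := by
        rw [Int.ediv_lt_iff_lt_mul hd']
        exact hiK
      have h3 : (0:ℤ) ≤ i / (d:ℤ) := Int.ediv_nonneg hi hd'.le
      omega
    · intro k hk hk2
      simp only [Finset.mem_range] at hk hk2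
      have h3 : (0:ℤ) ≤ i / (d:ℤ) := Int.ediv_nonneg hi hd'.le
      have h2 : i / (d:ℤ) + 1 ≤ (k:ℤ) := by omega
      have h5 : i < (i / (d:ℤ) + 1) * d := Int.lt_ediv_add_one_mul_self i hd'
      have h6 : (i/(d:ℤ)+1) * d ≤ (k:ℤ) * d := mul_le_mul_of_nonneg_right h2 hd'.le
      rw [hodge_neg (by omega)]
      norm_num

lemma hodge_succ (n d : ℕ) (j : ℤ) :
    (hodge (n+1) d j : ℤ) = ∑ y ∈ Finset.Icc (1:ℤ) ((d:ℤ)-1), (hodge n d (j - y) : ℤ) := by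
  have key : hodge (n+1) d j = ∑ y ∈ Finset.Icc (1:ℤ) ((d:ℤ)-1), hodge n d (j - y) := by
    unfold hodge
    rw [Finset.card_eq_sum_card_fiberwise
      (f := fun u : Fin (n+1) → ℤ => u 0) (t := Finset.Icc (1:ℤ) ((d:ℤ)-1)) ?_]
    · apply Finset.sum_congr rfl
      intro y hy
      refine Finset.card_bij' (fun u _ => Fin.tail u) (fun v _ => Fin.cons y v) ?_ ?_ ?_ ?_
      · intro u hu
        simp only [Finset.mem_filter, Fintype.mem_piFinset] at hu ⊢
        obtain ⟨⟨hmem, hsum⟩, h0⟩ := hu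
        constructor
        · intro i
          exact hmem i.succ
        · have hs := Fin.sum_univ_succ u
          have : ∑ i : Fin n, Fin.tail u i = ∑ i : Fin n, u i.succ := rfl
          omega
      · intro v hv
        simp only [Finset.mem_filter, Fintype.mem_piFinset] at hv ⊢
        obtain ⟨hmem, hsum⟩ := hv
        refine ⟨⟨fun i => ?_, ?_⟩, rfl⟩
        · rcases Fin.eq_zero_or_eq_succ i with h | ⟨i', rfl⟩
          · rw [h, Fin.cons_zero]; exact hy
          · rw [Fin.cons_succ]; exact hmem i'
        · rw [Fin.sum_univ_succ]
          simp only [Fin.cons_zero, Fin.cons_succ]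
          omega
      · intro u hu
        simp only [Finset.mem_filter] at hu
        show Fin.cons y (Fin.tail u) = u
        rw [← hu.2]
        exact Fin.cons_self_tail u
      · intro v _
        funext i
        exact Fin.cons_succ (α := fun _ : Fin (n+1) => ℤ) y v i
    · intro u hu
      rw [Finset.mem_coe, Finset.mem_filter, Fintype.mem_piFinset] at hu
      exact hu.1 0
  rw [key]
  push_cast
  rfl

lemma sum_Icc_to_range (g : ℤ → ℤ) (c : ℕ) :
    ∑ y ∈ Finset.Icc (1:ℤ) (c:ℤ), g y = ∑ k ∈ Finset.range c, g (1 + k) := by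
  refine Finset.sum_nbij' (fun y => (y - 1).toNat) (fun k => 1 + (k:ℤ)) ?_ ?_ ?_ ?_ ?_ <;>
    intro a ha <;> simp only [Finset.mem_Icc, Finset.mem_range] at ha ⊢
  · omega
  · omega
  · omega
  · omega
  · congr 1; omega

/-- Shift the summation index by one. -/
lemma sum_shift (F : ℤ → ℤ) (j : ℤ) (m : ℕ) :
    ∑ y ∈ Finset.range m, F (j - ((y + 1 : ℕ) : ℤ)) = ∑ y ∈ Finset.range m, F (j - 1 - y) :=
  Finset.sum_congr rfl fun y _ => by
    rw [show j - ((y + 1 : ℕ) : ℤ) = j - 1 - (y:ℤ) by push_cast; ring]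

lemma Hsum_succ {n d : ℕ} (hd : 0 < d) (j : ℤ) :
    Hsum (n+1) d j = ∑ y ∈ Finset.range (d-1), Hsum n d (j - 1 - y) := by
  have hd' : (0:ℤ) < d := by exact_mod_cast hd
  have hcast : ((d - 1 : ℕ) : ℤ) = (d:ℤ) - 1 := by omega
  rcases lt_or_ge j 0 with hj | hj
  · rw [Hsum_neg hj]
    symm
    apply Finset.sum_eq_zero
    intro y _
    have : (0:ℤ) ≤ (y:ℤ) := by positivity
    exact Hsum_neg (by omega)
  · set K := (j / (d:ℤ)).toNat + 1 with hK
    have hjnn : (0:ℤ) ≤ j / (d:ℤ) := Int.ediv_nonneg hj hd'.le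
    have hKc : ((K:ℕ):ℤ) = j / (d:ℤ) + 1 := by
      rw [hK]; push_cast [Int.toNat_of_nonneg hjnn]; ring
    have hjK : j < (K:ℤ) * d := by
      rw [hKc]
      exact Int.lt_ediv_add_one_mul_self j hd'
    rw [Hsum_eq_sum hd hjK]
    have step1 : ∀ k : ℕ, (hodge (n+1) d (j - (k:ℤ)*d) : ℤ)
        = ∑ y ∈ Finset.range (d-1), (hodge n d ((j - 1 - (y:ℤ)) - (k:ℤ)*d) : ℤ) := by
      intro k
      rw [hodge_succ, ← hcast, sum_Icc_to_range]
      apply Finset.sum_congr rfl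
      intro y _
      rw [show j - (k:ℤ)*(d:ℤ) - (1 + (y:ℤ)) = (j - 1 - (y:ℤ)) - (k:ℤ)*(d:ℤ) by ring]
    calc ∑ k ∈ Finset.range K, (hodge (n+1) d (j - (k:ℤ)*d) : ℤ)
        = ∑ k ∈ Finset.range K, ∑ y ∈ Finset.range (d-1),
            (hodge n d ((j - 1 - (y:ℤ)) - (k:ℤ)*d) : ℤ) := Finset.sum_congr rfl fun k _ => step1 k
      _ = ∑ y ∈ Finset.range (d-1), ∑ k ∈ Finset.range K,
            (hodge n d ((j - 1 - (y:ℤ)) - (k:ℤ)*d) : ℤ) := Finset.sum_comm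
      _ = ∑ y ∈ Finset.range (d-1), Hsum n d (j - 1 - y) := by
          apply Finset.sum_congr rfl
          intro y _
          have hy : (0:ℤ) ≤ (y:ℤ) := by positivity
          exact (Hsum_eq_sum hd (by omega)).symm

lemma Hsum_sub_d {n d : ℕ} (hd : 0 < d) (i : ℤ) :
    Hsum n d i - Hsum n d (i - d) = (hodge n d i : ℤ) := by
  have hd' : (0:ℤ) < d := by exact_mod_cast hd
  rcases lt_or_ge i 0 with hi | hi
  · rw [Hsum_neg hi, Hsum_neg (show i - (d:ℤ) < 0 by omega), hodge_neg hi]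
    norm_num
  rcases lt_or_ge i (d:ℤ) with hid | hid
  · have h1 : i / (d:ℤ) = 0 := Int.ediv_eq_zero_of_lt hi hid
    have h2 : Hsum n d i = (hodge n d i : ℤ) := by
      unfold Hsum
      rw [if_neg (not_lt.mpr hi), h1]
      norm_num
    rw [h2, Hsum_neg (show i - (d:ℤ) < 0 by omega)]
    ring
  · have h0 : (0:ℤ) ≤ i - d := by omega
    have h1 : i / (d:ℤ) = (i - d)/d + 1 := by
      conv_lhs => rw [show i = (i - (d:ℤ)) + 1 * d by ring]
      exact Int.add_mul_ediv_right _ 1 (by omega)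
    have h2 : (0:ℤ) ≤ (i - d) / d := Int.ediv_nonneg h0 hd'.le
    have h3 : (i / (d:ℤ)).toNat = ((i - d) / (d:ℤ)).toNat + 1 := by omega
    have key : Hsum n d i = Hsum n d (i - d) + (hodge n d i : ℤ) := by
      unfold Hsum
      rw [if_neg (not_lt.mpr hi), if_neg (show ¬ (i - (d:ℤ) < 0) by omega)]
      rw [h3, Finset.sum_range_succ' (fun k : ℕ => (hodge n d (i - (k:ℤ) * d) : ℤ))
        (((i - (d:ℤ)) / (d:ℤ)).toNat + 1)]
      have h4 : ∑ k ∈ Finset.range (((i - (d:ℤ)) / (d:ℤ)).toNat + 1),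
            (hodge n d (i - ((k + 1 : ℕ):ℤ) * d) : ℤ)
          = ∑ k ∈ Finset.range (((i - (d:ℤ)) / (d:ℤ)).toNat + 1),
            (hodge n d ((i - (d:ℤ)) - (k:ℤ) * d) : ℤ) :=
        Finset.sum_congr rfl fun k _ => by
          rw [show i - ((k + 1 : ℕ):ℤ) * (d:ℤ) = (i - (d:ℤ)) - (k:ℤ) * d by push_cast; ring]
      rw [h4]
      simp only [Nat.cast_zero, zero_mul, sub_zero]
    linarith

/-- The window sum over a full period. -/
noncomputable def Wsum (n d : ℕ) (j : ℤ) : ℤ := ∑ y ∈ Finset.range d, Hsum n d (j - y)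

lemma Wsum_eq {n d : ℕ} (hd : 0 < d) (j : ℤ) :
    Wsum n d j = Hsum n d j + Hsum (n+1) d j := by
  obtain ⟨m, rfl⟩ : ∃ m, d = m + 1 := ⟨d - 1, by omega⟩
  unfold Wsum
  rw [Finset.sum_range_succ' (fun y : ℕ => Hsum n (m+1) (j - y)) m,
      sum_shift (fun x => Hsum n (m+1) x) j m, Hsum_succ hd j]
  simp only [Nat.cast_zero, sub_zero, Nat.add_sub_cancel]
  ring

lemma Wsum_sub {n d : ℕ} (hd : 0 < d) (j : ℤ) :
    Wsum n d j - Wsum n d (j - 1) = Hsum n d j - Hsum n d (j - d) := by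
  obtain ⟨m, rfl⟩ : ∃ m, d = m + 1 := ⟨d - 1, by omega⟩
  unfold Wsum
  rw [Finset.sum_range_succ' (fun y : ℕ => Hsum n (m+1) (j - y)) m,
      sum_shift (fun x => Hsum n (m+1) x) j m,
      Finset.sum_range_succ (fun y : ℕ => Hsum n (m+1) (j - 1 - y)) m]
  simp only [Nat.cast_zero, sub_zero]
  rw [show j - 1 - (m:ℤ) = j - ((m+1:ℕ):ℤ) by push_cast; ring]
  ring

lemma Wsum_window {n d : ℕ} (hd : 0 < d) (j : ℤ) (k : ℕ) :
    Wsum n d j - Wsum n d (j - k) = ∑ y ∈ Finset.range k, (hodge n d (j - y) : ℤ) := by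
  induction k with
  | zero => simp
  | succ k ih =>
    have h2 := Wsum_sub (n := n) hd (j - k)
    have h3 := Hsum_sub_d (n := n) hd (j - k)
    have h1 : j - ((k+1 : ℕ) : ℤ) = (j - (k:ℕ)) - 1 := by push_cast; ring
    rw [Finset.sum_range_succ, h1]
    linarith

lemma gcd_mod {d : ℕ} {a b : ℤ} (h : (d:ℤ) ∣ a - b) : Int.gcd a d = Int.gcd b d := by
  obtain ⟨c, hc⟩ := h
  have hab : a = b + d * c := by linarith
  subst hab
  apply Nat.dvd_antisymm
  · rw [← Int.natCast_dvd_natCast]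
    apply Int.dvd_coe_gcd
    · have h1 : ((Int.gcd (b + d*c) d : ℕ) : ℤ) ∣ b + d*c := Int.gcd_dvd_left _ _
      have h2 : ((Int.gcd (b + d*c) d : ℕ) : ℤ) ∣ (d:ℤ) := Int.gcd_dvd_right _ _
      have h3 : ((Int.gcd (b + d*c) d : ℕ) : ℤ) ∣ (d:ℤ) * c := Dvd.dvd.mul_right h2 c
      have h4 := dvd_sub h1 h3
      simpa using h4
    · exact Int.gcd_dvd_right _ _
  · rw [← Int.natCast_dvd_natCast]
    apply Int.dvd_coe_gcd
    · have h1 : ((Int.gcd b d : ℕ) : ℤ) ∣ b := Int.gcd_dvd_left _ _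
      have h2 : ((Int.gcd b d : ℕ) : ℤ) ∣ (d:ℤ) := Int.gcd_dvd_right _ _
      exact dvd_add h1 (Dvd.dvd.mul_right h2 c)
    · exact Int.gcd_dvd_right _ _

lemma gcd_eq_iff_dvd {d : ℕ} {a : ℤ} (hd : 0 < d) : Int.gcd a d = d ↔ (d:ℤ) ∣ a := by
  constructor
  · intro h
    have h1 : ((Int.gcd a d : ℕ) : ℤ) ∣ a := Int.gcd_dvd_left _ _
    rw [h] at h1
    exact h1
  · intro h
    have h2 : Int.gcd a d = Int.gcd 0 d := gcd_mod (by simpa using h)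
    rw [h2]
    simp [Int.gcd]

lemma Hsum_zero_eq {d : ℕ} (hd : 0 < d) (i : ℤ) :
    Hsum 0 d i = if 0 ≤ i ∧ (d:ℤ) ∣ i then 1 else 0 := by
  have hd' : (0:ℤ) < d := by exact_mod_cast hd
  have hodge0 : ∀ j : ℤ, (hodge 0 d j : ℤ) = if j = 0 then 1 else 0 := by
    intro j
    unfold hodge
    have huniv : ∀ u : Fin 0 → ℤ, ∑ i, u i = (0:ℤ) := by
      intro u
      simp
    rcases eq_or_ne j 0 with rfl | hj
    · rw [Finset.filter_true_of_mem (fun u _ => huniv u)]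
      simp [Fintype.card_piFinset]
    · rw [Finset.filter_false_of_mem (fun u _ => by rw [huniv u]; omega)]
      simp [hj]
  rcases lt_or_ge i 0 with hi | hi
  · rw [Hsum_neg hi, if_neg (by omega)]
  · unfold Hsum
    rw [if_neg (not_lt.mpr hi)]
    have hnn : (0:ℤ) ≤ i / d := Int.ediv_nonneg hi hd'.le
    rcases em ((d:ℤ) ∣ i) with hdvd | hndvd
    · rw [if_pos ⟨hi, hdvd⟩]
      have hX : i - ((i / (d:ℤ)).toNat : ℤ) * d = 0 := by
        rw [Int.toNat_of_nonneg hnn]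
        obtain ⟨c, rfl⟩ := hdvd
        rw [Int.mul_ediv_cancel_left c (show (d:ℤ) ≠ 0 by omega)]
        ring
      have hmem : (i / (d:ℤ)).toNat ∈ Finset.range ((i / (d:ℤ)).toNat + 1) := by
        simp only [Finset.mem_range]; omega
      have hzero' : ∀ k ∈ Finset.range ((i / (d:ℤ)).toNat + 1), k ≠ (i / (d:ℤ)).toNat →
          (hodge 0 d (i - (k:ℤ) * d) : ℤ) = 0 := by
        intro k hk hkne
        have hne : i - (k:ℤ)*d ≠ 0 := by
          intro hz
          have hi' : i = (k:ℤ) * d := by linarith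
          have hc : (k:ℤ) = i / (d:ℤ) := by
            rw [hi', Int.mul_ediv_cancel _ (show (d:ℤ) ≠ 0 by omega)]
          omega
        rw [hodge0, if_neg hne]
      rw [Finset.sum_eq_single_of_mem _ hmem hzero', hodge0, if_pos hX]
    · rw [if_neg (by tauto)]
      apply Finset.sum_eq_zero
      intro k _
      have hne : i - (k:ℤ)*d ≠ 0 := by
        intro hz
        exact hndvd ⟨k, by linarith [mul_comm ((d:ℤ)) ((k:ℤ))]⟩
      rw [hodge0, if_neg hne]

/-- Main monotonicity lemma: if `gcd(j,d) = gcd(j-s,d)` and `0 ≤ s ≤ d` then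
`H_{j-s} ≤ H_j`. -/
lemma Hsum_mono (d : ℕ) (hd : 0 < d) :
    ∀ n : ℕ, ∀ j s : ℤ, 0 ≤ s → s ≤ (d:ℤ) →
      Int.gcd j d = Int.gcd (j - s) d → Hsum n d (j - s) ≤ Hsum n d j := by
  intro n
  induction n with
  | zero =>
    intro j s hs0 _ hgcd
    rw [Hsum_zero_eq hd (j - s), Hsum_zero_eq hd j]
    rcases em (0 ≤ j - s ∧ (d:ℤ) ∣ (j - s)) with hc | hc
    · rw [if_pos hc]
      have h1 : Int.gcd (j - s) d = d := (gcd_eq_iff_dvd hd).mpr hc.2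
      have h2 : (d:ℤ) ∣ j := (gcd_eq_iff_dvd hd).mp (by omega)
      rw [if_pos ⟨by omega, h2⟩]
    · rw [if_neg hc]
      split <;> norm_num
  | succ n ih =>
    intro j s hs0 hsd hgcd
    rcases eq_or_lt_of_le hs0 with hs | hs
    · rw [← hs]
      norm_num
    · -- 1 ≤ s
      set k : ℕ := s.toNat with hk
      have hks : ((k:ℕ):ℤ) = s := Int.toNat_of_nonneg hs0
      obtain ⟨m, hm⟩ : ∃ m, k = m + 1 := ⟨k - 1, by omega⟩
      have e1 := Wsum_eq (n := n) hd j
      have e2 := Wsum_eq (n := n) hd (j - s)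
      have e3 : Wsum n d j - Wsum n d (j - s)
          = ∑ y ∈ Finset.range k, (hodge n d (j - y) : ℤ) := by
        rw [← hks]
        exact Wsum_window hd j k
      have e4 : ∑ y ∈ Finset.range k, (hodge n d (j - y) : ℤ)
          = (hodge n d j : ℤ) + ∑ y ∈ Finset.range m, (hodge n d (j - 1 - y) : ℤ) := by
        rw [hm, Finset.sum_range_succ' (fun y : ℕ => (hodge n d (j - y) : ℤ)) m,
          sum_shift (fun x => (hodge n d x : ℤ)) j m]
        simp only [Nat.cast_zero, sub_zero]
        ring
      have e5 := Hsum_sub_d (n := n) hd j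
      have e6 : Hsum n d (j - d) ≤ Hsum n d (j - s) := by
        have hgcd2 : Int.gcd (j - s) d = Int.gcd ((j - s) - ((d:ℤ) - s)) d := by
          have h1 : (j - s) - ((d:ℤ) - s) = j - d := by ring
          rw [h1]
          have h2 : Int.gcd (j - d) d = Int.gcd j d := gcd_mod ⟨-1, by ring⟩
          omega
        have h3 := ih (j - s) ((d:ℤ) - s) (by omega) (by omega) hgcd2
        have h1 : (j - s) - ((d:ℤ) - s) = j - d := by ring
        rwa [h1] at h3
      have e7 : (0:ℤ) ≤ ∑ y ∈ Finset.range m, (hodge n d (j - 1 - y) : ℤ) :=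
        Finset.sum_nonneg fun y _ => by positivity
      linarith

/-- Nonnegativity of Frobenius numbers: `h_{j,0} = H_j − H_{j−σ_j(0)} ≥ 0` and
`h_{j,1} = H_{j−σ_j(0)} − H_{j−d} ≥ 0`, where `σ_j(0)` is the unique
`s ∈ {1,…,d}` with `p·s ≡ (p−1)·j (mod d)`. -/
theorem frobenius_numbers_nonneg (n d p : ℕ) (hn : 1 ≤ n) (hd : 2 ≤ d)
    (hp : p.Prime) (hpd : Nat.gcd p d = 1) (j : ℤ)
    (hj0 : 0 ≤ j) (hj1 : j ≤ (n : ℤ) * d)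
    (s : ℤ) (hs1 : 1 ≤ s) (hs2 : s ≤ d)
    (hs : (d : ℤ) ∣ (p : ℤ) * s - ((p : ℤ) - 1) * j) :
    0 ≤ Hsum n d j - Hsum n d (j - s) ∧ 0 ≤ Hsum n d (j - s) - Hsum n d (j - d) := by
  have hd0 : 0 < d := by omega
  have hgcd : Int.gcd j d = Int.gcd (j - s) d := by
    have h1 : (d:ℤ) ∣ j - (p:ℤ)*(j-s) := by
      rw [show j - (p:ℤ)*(j-s) = (p:ℤ)*s - ((p:ℤ)-1)*j by ring]
      exact hs
    have h2 : Int.gcd j d = Int.gcd ((p:ℤ)*(j-s)) d := gcd_mod h1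
    have h3 : Int.gcd ((p:ℤ)*(j-s)) d = Int.gcd (j-s) d := by
      unfold Int.gcd
      rw [Int.natAbs_mul, Int.natAbs_natCast, Int.natAbs_natCast]
      exact Nat.Coprime.gcd_mul_left_cancel _ hpd
    omega
  constructor
  · have h4 := Hsum_mono d hd0 n j s (by omega) hs2 hgcd
    linarith
  · have hgcd2 : Int.gcd (j - s) d = Int.gcd ((j - s) - ((d:ℤ) - s)) d := by
      rw [show (j - s) - ((d:ℤ) - s) = j - d by ring]
      have h2 : Int.gcd (j - d) d = Int.gcd j d := gcd_mod ⟨-1, by ring⟩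
      omega
    have h5 := Hsum_mono d hd0 n (j - s) ((d:ℤ) - s) (by omega) (by omega) hgcd2
    rw [show (j - s) - ((d:ℤ) - s) = j - d by ring] at h5
    linarith
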